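/- Fix a Hermitian matrix H and a Hermitian matrix A on ℂ^n and β > 0. Let F(t) = -(1/β) log Tr(e^{-β(H+tA)}) and let ω^β(A) = Tr(e^{-βH} A)/Tr(e^{-βH}) be the Gibbs state expectation. Then for all t > 0: (F(0) - F(-t))/t ≥ ω^β(A) ≥ (F(t) - F(0))/t. -/

import Mathlib

open Matrix
open Matrix NormedSpace Finset

namespace GibbsAux
variable {n : ℕ}

lemma smul_isHermitian {M : Matrix (Fin n) (Fin n) ℂ} (hM : M.IsHermitian) (c : ℝ) :
    ((c : ℂ) • M).IsHermitian := by
  unfold Matrix.IsHermitian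
  rw [Matrix.conjTranspose_smul, hM.eq]
  simp [Complex.star_def, Complex.conj_ofReal]

lemma exp_hermitian {M : Matrix (Fin n) (Fin n) ℂ} (hM : M.IsHermitian) :
    exp M = (hM.eigenvectorUnitary : Matrix (Fin n) (Fin n) ℂ) *
      diagonal (fun i => Complex.exp (hM.eigenvalues i)) *
      star (hM.eigenvectorUnitary : Matrix (Fin n) (Fin n) ℂ) := by
  set U := (hM.eigenvectorUnitary : Matrix (Fin n) (Fin n) ℂ) with hU
  have h1 : U * star U = 1 := Matrix.mem_unitaryGroup_iff.mp hM.eigenvectorUnitary.2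
  have h2 : star U * U = 1 := Matrix.mem_unitaryGroup_iff'.mp hM.eigenvectorUnitary.2
  have hUinv : U⁻¹ = star U := Matrix.inv_eq_left_inv h2
  have hUnit : IsUnit U := ⟨⟨U, star U, h1, h2⟩, rfl⟩
  conv_lhs => rw [hM.spectral_theorem, Unitary.conjStarAlgAut_apply]
  rw [← hUinv, Matrix.exp_conj U _ hUnit, Matrix.exp_diagonal, Pi.exp_def]
  congr 2
  funext i
  simp [Function.comp, ← Complex.exp_eq_exp_ℂ, RCLike.ofReal]

lemma conj_diag_entry (U : Matrix (Fin n) (Fin n) ℂ) (e : Fin n → ℂ) (i : Fin n) :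
    (U * diagonal e * star U) i i = ∑ j, (Complex.normSq (U i j) : ℂ) * e j := by
  rw [Matrix.mul_apply]
  refine Finset.sum_congr rfl fun j _ => ?_
  rw [Matrix.mul_diagonal, Matrix.star_apply]
  simp only [Complex.star_def]
  linear_combination (e j) * Complex.mul_conj (U i j)


lemma row_sum_one {U : Matrix (Fin n) (Fin n) ℂ} (hU : U * star U = 1) (i : Fin n) :
    ∑ j, Complex.normSq (U i j) = 1 := by
  have h := congrFun (congrFun hU i) i
  rw [Matrix.mul_apply, Matrix.one_apply_eq] at h
  have : ∑ j, (Complex.normSq (U i j) : ℂ) = 1 := by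
    rw [← h]
    refine (Finset.sum_congr rfl fun j _ => ?_).symm
    rw [Matrix.star_apply]
    simp only [Complex.star_def]
    exact Complex.mul_conj (U i j)
  exact_mod_cast this

lemma trace_exp_re {M : Matrix (Fin n) (Fin n) ℂ} (hM : M.IsHermitian) :
    (Matrix.trace (exp M)).re = ∑ i, Real.exp (hM.eigenvalues i) := by
  rw [exp_hermitian hM, Matrix.trace_mul_cycle, Matrix.mem_unitaryGroup_iff'.mp
    hM.eigenvectorUnitary.2, one_mul, Matrix.trace_diagonal]
  rw [Complex.re_sum]
  simp [Complex.exp_ofReal_re]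

lemma diag_entry_re {M : Matrix (Fin n) (Fin n) ℂ} (hM : M.IsHermitian) (i : Fin n) :
    (M i i).re = ∑ j, Complex.normSq ((hM.eigenvectorUnitary : Matrix (Fin n) (Fin n) ℂ) i j)
      * hM.eigenvalues j := by
  have h : M i i = ((∑ j, Complex.normSq ((hM.eigenvectorUnitary :
      Matrix (Fin n) (Fin n) ℂ) i j) * hM.eigenvalues j : ℝ) : ℂ) := by
    conv_lhs => rw [hM.spectral_theorem, Unitary.conjStarAlgAut_apply]
    rw [conj_diag_entry]
    push_cast
    rfl
  rw [h, Complex.ofReal_re]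

lemma exp_diag_entry_re {M : Matrix (Fin n) (Fin n) ℂ} (hM : M.IsHermitian) (i : Fin n) :
    ((exp M) i i).re = ∑ j, Complex.normSq ((hM.eigenvectorUnitary :
      Matrix (Fin n) (Fin n) ℂ) i j) * Real.exp (hM.eigenvalues j) := by
  have h : (exp M) i i = ((∑ j, Complex.normSq ((hM.eigenvectorUnitary :
      Matrix (Fin n) (Fin n) ℂ) i j) * Real.exp (hM.eigenvalues j) : ℝ) : ℂ) := by
    rw [exp_hermitian hM, conj_diag_entry]
    push_cast
    simp [← Complex.ofReal_exp]
  rw [h, Complex.ofReal_re]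

lemma peierls_entry {M : Matrix (Fin n) (Fin n) ℂ} (hM : M.IsHermitian) (i : Fin n) :
    Real.exp ((M i i).re) ≤ ((exp M) i i).re := by
  rw [diag_entry_re hM i, exp_diag_entry_re hM i]
  have hw0 : ∀ j ∈ Finset.univ, 0 ≤ Complex.normSq ((hM.eigenvectorUnitary :
      Matrix (Fin n) (Fin n) ℂ) i j) := fun j _ => Complex.normSq_nonneg _
  have hw1 : ∑ j, Complex.normSq ((hM.eigenvectorUnitary :
      Matrix (Fin n) (Fin n) ℂ) i j) = 1 :=
    row_sum_one (Matrix.mem_unitaryGroup_iff.mp hM.eigenvectorUnitary.2) i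
  have := convexOn_exp.map_sum_le (t := Finset.univ) (p := hM.eigenvalues) hw0 hw1
    (fun j _ => Set.mem_univ _)
  simpa [smul_eq_mul] using this

lemma peierls_trace {M : Matrix (Fin n) (Fin n) ℂ} (hM : M.IsHermitian) :
    ∑ i, Real.exp ((M i i).re) ≤ (Matrix.trace (exp M)).re := by
  rw [Matrix.trace, Complex.re_sum]
  exact Finset.sum_le_sum fun i _ => peierls_entry hM i


lemma jensen_weights (d c : Fin n → ℝ) :
    (∑ i, Real.exp (d i)) * Real.exp ((∑ i, Real.exp (d i) * c i) / (∑ i, Real.exp (d i)))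
      ≤ ∑ i, Real.exp (d i + c i) := by
  rcases Nat.eq_zero_or_pos n with h0 | hpos
  · subst h0; simp
  set Z := ∑ i, Real.exp (d i) with hZ
  have hZpos : 0 < Z := Finset.sum_pos (fun i _ => Real.exp_pos _)
    (Finset.univ_nonempty_iff.mpr (Fin.pos_iff_nonempty.mp hpos))
  have hw0 : ∀ i ∈ Finset.univ, (0:ℝ) ≤ Real.exp (d i) / Z :=
    fun i _ => div_nonneg (Real.exp_pos _).le hZpos.le
  have hw1 : ∑ i, Real.exp (d i) / Z = 1 := by
    rw [← Finset.sum_div, ← hZ, div_self hZpos.ne']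
  have hj := convexOn_exp.map_sum_le (t := Finset.univ) (p := c) hw0 hw1
    (fun i _ => Set.mem_univ _)
  simp only [smul_eq_mul] at hj
  have he : ∑ i, Real.exp (d i) / Z * c i = (∑ i, Real.exp (d i) * c i) / Z := by
    rw [Finset.sum_div]
    exact Finset.sum_congr rfl fun i _ => by ring
  rw [he] at hj
  have := mul_le_mul_of_nonneg_left hj hZpos.le
  calc Z * Real.exp ((∑ i, Real.exp (d i) * c i) / Z)
      ≤ Z * ∑ i, Real.exp (d i) / Z * Real.exp (c i) := this
    _ = ∑ i, Real.exp (d i + c i) := by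
        rw [Finset.mul_sum]
        refine Finset.sum_congr rfl fun i _ => ?_
        rw [Real.exp_add]
        field_simp

lemma tracey (e : Fin n → ℂ) (X : Matrix (Fin n) (Fin n) ℂ) :
    Matrix.trace (diagonal e * X) = ∑ i, e i * X i i := by
  rw [Matrix.trace]
  exact Finset.sum_congr rfl fun i _ => by rw [Matrix.diag_apply, Matrix.diagonal_mul]

lemma peierls_bogolyubov (B C : Matrix (Fin n) (Fin n) ℂ)
    (hB : B.IsHermitian) (hC : C.IsHermitian) :
    (Matrix.trace (exp B)).re *
      Real.exp ((Matrix.trace (exp B * C)).re / (Matrix.trace (exp B)).re)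
      ≤ (Matrix.trace (exp (B + C))).re := by
  set U := (hB.eigenvectorUnitary : Matrix (Fin n) (Fin n) ℂ) with hUdef
  have h1 : U * star U = 1 := Matrix.mem_unitaryGroup_iff.mp hB.eigenvectorUnitary.2
  have h2 : star U * U = 1 := Matrix.mem_unitaryGroup_iff'.mp hB.eigenvectorUnitary.2
  have hUinv : U⁻¹ = star U := Matrix.inv_eq_left_inv h2
  have hUnit : IsUnit U := ⟨⟨U, star U, h1, h2⟩, rfl⟩
  set μ := hB.eigenvalues with hμdef
  set M : Matrix (Fin n) (Fin n) ℂ := star U * (B + C) * U with hMdef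
  have hMh : M.IsHermitian := by
    unfold Matrix.IsHermitian
    rw [hMdef, Matrix.conjTranspose_mul, Matrix.conjTranspose_mul, (hB.add hC).eq,
      Matrix.star_eq_conjTranspose, Matrix.conjTranspose_conjTranspose,
      ← Matrix.star_eq_conjTranspose, Matrix.mul_assoc]
  have hsand : U * M * star U = B + C := by
    rw [hMdef]
    rw [Matrix.mul_assoc, Matrix.mul_assoc, Matrix.mul_assoc]
    rw [h1, Matrix.mul_one, ← Matrix.mul_assoc, h1, Matrix.one_mul]
  -- trace of exp (B+C) equals trace of exp M
  have htr : Matrix.trace (exp (B + C)) = Matrix.trace (exp M) := by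
    rw [← hsand, ← hUinv, Matrix.exp_conj U M hUnit, hUinv,
      Matrix.trace_mul_cycle, h2, Matrix.one_mul]
  -- diagonal of M
  set c : Fin n → ℝ := fun i => ((star U * C * U) i i).re with hcdef
  have hdiagB : star U * B * U = diagonal (RCLike.ofReal ∘ μ) :=
    by
      have := hB.conjStarAlgAut_star_eigenvectorUnitary
      rw [Unitary.conjStarAlgAut_star_apply] at this
      exact this
  have hMij : ∀ i, (M i i).re = μ i + c i := by
    intro i
    have : M i i = (star U * B * U) i i + (star U * C * U) i i := by
      rw [hMdef]
      simp [Matrix.mul_add, Matrix.add_mul, Matrix.add_apply]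
    rw [this, hdiagB]
    simp [Complex.add_re, hcdef, Matrix.diagonal_apply_eq, Function.comp]
  -- trace (exp B * C)
  have htrC : (Matrix.trace (exp B * C)).re = ∑ i, Real.exp (μ i) * c i := by
    have : Matrix.trace (exp B * C) =
        ∑ i, Complex.exp (μ i) * (star U * C * U) i i := by
      conv_lhs => rw [exp_hermitian hB, ← hUdef, ← hμdef]
      rw [show U * diagonal (fun i => Complex.exp ((μ i : ℂ))) * star U * C
            = U * (diagonal (fun i => Complex.exp ((μ i : ℂ))) * (star U * C)) from by
          rw [Matrix.mul_assoc, Matrix.mul_assoc],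
        Matrix.trace_mul_comm, Matrix.mul_assoc, tracey _ _]
    rw [this, Complex.re_sum]
    refine Finset.sum_congr rfl fun i _ => ?_
    rw [← Complex.ofReal_exp]
    simp [Complex.mul_re, hcdef, Complex.exp_ofReal_re]
  have hZ : (Matrix.trace (exp B)).re = ∑ i, Real.exp (μ i) := trace_exp_re hB
  calc (Matrix.trace (exp B)).re *
      Real.exp ((Matrix.trace (exp B * C)).re / (Matrix.trace (exp B)).re)
      = (∑ i, Real.exp (μ i)) *
        Real.exp ((∑ i, Real.exp (μ i) * c i) / (∑ i, Real.exp (μ i))) := by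
        rw [hZ, htrC]
    _ ≤ ∑ i, Real.exp (μ i + c i) := jensen_weights μ c
    _ = ∑ i, Real.exp ((M i i).re) := by
        refine Finset.sum_congr rfl fun i _ => ?_
        rw [hMij i]
    _ ≤ (Matrix.trace (exp M)).re := peierls_trace hMh
    _ = (Matrix.trace (exp (B + C))).re := by rw [htr]


lemma trace_mul_smul_re (X A : Matrix (Fin n) (Fin n) ℂ) (r : ℝ) :
    (Matrix.trace (X * ((r : ℂ) • A))).re = r * (Matrix.trace (X * A)).re := by
  rw [mul_smul_comm, Matrix.trace_smul]
  simp [smul_eq_mul, Complex.mul_re]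

lemma exp_trace_pos (hpos : 0 < n) {M : Matrix (Fin n) (Fin n) ℂ} (hM : M.IsHermitian) :
    0 < (Matrix.trace (exp M)).re := by
  refine lt_of_lt_of_le ?_ (peierls_trace hM)
  exact Finset.sum_pos (fun i _ => Real.exp_pos _)
    (Finset.univ_nonempty_iff.mpr (Fin.pos_iff_nonempty.mp hpos))

lemma free_energy_step {β t L0 L1 w : ℝ} (hβ : 0 < β) (ht : 0 < t)
    (h : L0 - β * t * w ≤ L1) :
    (-(1/β) * L1 - (-(1/β) * L0)) / t ≤ w := by
  rw [div_le_iff₀ ht]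
  have h2 : (1/β) * (L0 - β * t * w) ≤ (1/β) * L1 :=
    mul_le_mul_of_nonneg_left h (by positivity)
  have h3 : (1/β) * (L0 - β * t * w) = (1/β) * L0 - w * t := by
    field_simp
  rw [h3] at h2
  linarith

lemma free_energy_step' {β t L0 L2 w : ℝ} (hβ : 0 < β) (ht : 0 < t)
    (h : L0 + β * t * w ≤ L2) :
    w ≤ (-(1/β) * L0 - (-(1/β) * L2)) / t := by
  rw [le_div_iff₀ ht]
  have h2 : (1/β) * (L0 + β * t * w) ≤ (1/β) * L2 :=
    mul_le_mul_of_nonneg_left h (by positivity)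
  have h3 : (1/β) * (L0 + β * t * w) = (1/β) * L0 + w * t := by
    field_simp
  rw [h3] at h2
  linarith

lemma log_step {Z0 Z1 x : ℝ} (h0 : 0 < Z0) (h1 : 0 < Z1)
    (h : Z0 * Real.exp x ≤ Z1) : Real.log Z0 + x ≤ Real.log Z1 := by
  have := Real.log_le_log (by positivity) h
  rwa [Real.log_mul h0.ne' (Real.exp_ne_zero _), Real.log_exp] at this

end GibbsAux

open GibbsAux

/-- Difference quotients of the free energy `F(t) = -(1/β) log Tr(e^{-β(H+tA)})`
sandwich the Gibbs expectation `ω^β(A) = Tr(e^{-βH}A)/Tr(e^{-βH})`: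
for `t > 0`, `(F(0)-F(-t))/t ≥ ω^β(A) ≥ (F(t)-F(0))/t`. -/
theorem gibbs_expectation_sandwiched {n : ℕ} (β : ℝ) (hβ : 0 < β)
    (H A : Matrix (Fin n) (Fin n) ℂ) (hH : H.IsHermitian) (hA : A.IsHermitian)
    (t : ℝ) (ht : 0 < t) :
    let F : ℝ → ℝ := fun s =>
      -(1 / β) * Real.log
        ((Matrix.trace (NormedSpace.exp ((-β : ℂ) • (H + (s : ℂ) • A)))).re)
    let ω : ℝ := (Matrix.trace (NormedSpace.exp ((-β : ℂ) • H) * A)).re /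
      (Matrix.trace (NormedSpace.exp ((-β : ℂ) • H))).re
    (F t - F 0) / t ≤ ω ∧ ω ≤ (F 0 - F (-t)) / t := by
  intro F ω
  rcases Nat.eq_zero_or_pos n with h0 | hpos
  · subst h0
    have hz : ∀ M : Matrix (Fin 0) (Fin 0) ℂ, Matrix.trace M = 0 := fun M => by
      simp [Matrix.trace]
    simp only [F, ω, hz, Complex.zero_re, Real.log_zero, mul_zero, sub_zero, zero_div, div_zero]
    norm_num
  have hBh : ((-β : ℂ) • H).IsHermitian := by
    have := smul_isHermitian hH (-β)
    simpa using this
  set B : Matrix (Fin n) (Fin n) ℂ := (-β : ℂ) • H with hBdef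
  set Z0 : ℝ := (Matrix.trace (NormedSpace.exp B)).re with hZ0def
  set TA : ℝ := (Matrix.trace (NormedSpace.exp B * A)).re with hTAdef
  have hZ0pos : 0 < Z0 := exp_trace_pos hpos hBh
  have hωdef : ω = TA / Z0 := rfl
  -- matrix rewriting
  have hmat : ∀ s r : ℝ, r = -(β * s) →
      (-β : ℂ) • (H + (s : ℂ) • A) = B + (r : ℂ) • A := by
    intro s r hr
    subst hr
    ext i j
    simp only [Matrix.smul_apply, Matrix.add_apply, smul_eq_mul, hBdef]
    push_cast
    ring
  have hm0 : (-β : ℂ) • (H + ((0 : ℝ) : ℂ) • A) = B := by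
    rw [hmat 0 0 (by ring)]
    simp
  have hmt := hmat t (-(β * t)) rfl
  have hmnt := hmat (-t) (β * t) (by ring)
  -- Hermitian perturbed matrices
  have hC1 : (((-(β * t) : ℝ) : ℂ) • A).IsHermitian := smul_isHermitian hA _
  have hC2 : (((β * t : ℝ) : ℂ) • A).IsHermitian := smul_isHermitian hA _
  have hB1 : (B + ((-(β * t) : ℝ) : ℂ) • A).IsHermitian := hBh.add hC1
  have hB2 : (B + ((β * t : ℝ) : ℂ) • A).IsHermitian := hBh.add hC2
  set Z1 : ℝ := (Matrix.trace (NormedSpace.exp (B + ((-(β * t) : ℝ) : ℂ) • A))).re with hZ1def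
  set Z2 : ℝ := (Matrix.trace (NormedSpace.exp (B + ((β * t : ℝ) : ℂ) • A))).re with hZ2def
  have hZ1pos : 0 < Z1 := exp_trace_pos hpos hB1
  have hZ2pos : 0 < Z2 := exp_trace_pos hpos hB2
  -- Peierls–Bogolyubov, twice
  have hpb1 := peierls_bogolyubov B (((-(β * t) : ℝ) : ℂ) • A) hBh hC1
  have hpb2 := peierls_bogolyubov B (((β * t : ℝ) : ℂ) • A) hBh hC2
  rw [trace_mul_smul_re] at hpb1 hpb2
  have hlog1 : Real.log Z0 + (-(β * t) * TA) / Z0 ≤ Real.log Z1 :=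
    log_step hZ0pos hZ1pos hpb1
  have hlog2 : Real.log Z0 + (β * t * TA) / Z0 ≤ Real.log Z2 :=
    log_step hZ0pos hZ2pos hpb2
  -- free energy values
  have hFt : F t = -(1/β) * Real.log Z1 := by
    show -(1/β) * Real.log ((Matrix.trace (NormedSpace.exp
      ((-β : ℂ) • (H + ((t : ℝ) : ℂ) • A)))).re) = _
    rw [hmt]
  have hF0 : F 0 = -(1/β) * Real.log Z0 := by
    show -(1/β) * Real.log ((Matrix.trace (NormedSpace.exp
      ((-β : ℂ) • (H + ((0 : ℝ) : ℂ) • A)))).re) = _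
    rw [hm0]
  have hFnt : F (-t) = -(1/β) * Real.log Z2 := by
    show -(1/β) * Real.log ((Matrix.trace (NormedSpace.exp
      ((-β : ℂ) • (H + ((-t : ℝ) : ℂ) • A)))).re) = _
    rw [hmnt]
  constructor
  · rw [hFt, hF0, hωdef]
    refine free_energy_step hβ ht ?_
    have he : (-(β * t) * TA) / Z0 = -(β * t * (TA / Z0)) := by ring
    rw [he] at hlog1
    linarith
  · rw [hFnt, hF0, hωdef]
    refine free_energy_step' hβ ht ?_
    have he : (β * t * TA) / Z0 = β * t * (TA / Z0) := by ring
    rw [he] at hlog2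
    linarith
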